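/- Let G be a subgraph of the complete bipartite graph K_{6,40} with parts X (of size 6) and Y (of size 40) such that G contains no copy of K_{2,2}, and suppose Δ(G_X) = 9 and x₁ ∈ X is a vertex of degree 9. If some vertex x ∈ X \ {x₁} has no neighbor in N_G(x₁), or if two distinct vertices x, x' ∈ X \ {x₁} have a common neighbor lying in N_G(x₁), then the bipartite complement of G contains a copy of K_{5,5}. -/

import Mathlib

/-- A subgraph of the complete bipartite graph `K_{m,n}` is identified with its
edge set, a finset of pairs `(x, y)` with `x` in the part `X = Fin m` and
`y` in the part `Y = Fin n`.  `bContains s t E` says that the bipartite graph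
with edge set `E` contains a copy of `K_{s,t}`: there are `s` distinct
vertices of `X` and `t` distinct vertices of `Y` with all pairs present. -/
def bContains {m n : ℕ} (s t : ℕ) (E : Finset (Fin m × Fin n)) : Prop :=
  ∃ (A : Finset (Fin m)) (B : Finset (Fin n)),
    A.card = s ∧ B.card = t ∧ ∀ x ∈ A, ∀ y ∈ B, (x, y) ∈ E

/-- The bipartite complement: edge set `(X × Y) \ E`. -/
def bCompl {m n : ℕ} (E : Finset (Fin m × Fin n)) : Finset (Fin m × Fin n) :=
  Finset.univ \ E

/-- The neighborhood `N_G(x) ⊆ Y` of a vertex `x ∈ X`. -/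
def bNbhd {m n : ℕ} (E : Finset (Fin m × Fin n)) (x : Fin m) : Finset (Fin n) :=
  Finset.univ.filter (fun y => (x, y) ∈ E)

/-- The degree of a vertex `x ∈ X`. -/
def bDeg {m n : ℕ} (E : Finset (Fin m × Fin n)) (x : Fin m) : ℕ :=
  (bNbhd E x).card

/-- `Δ(G_X)`: the maximum degree over the vertices of the part `X`. -/
def bMaxDegX {m n : ℕ} (E : Finset (Fin m × Fin n)) : ℕ :=
  Finset.univ.sup (fun x => bDeg E x)

theorem stmt_10 (E : Finset (Fin 6 × Fin 40))
    (hK : ¬ bContains 2 2 E) (hΔ : bMaxDegX E = 9)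
    (x₁ : Fin 6) (hx₁ : bDeg E x₁ = 9)
    (h : (∃ x : Fin 6, x ≠ x₁ ∧ bNbhd E x ∩ bNbhd E x₁ = ∅) ∨
         (∃ x x' : Fin 6, x ≠ x' ∧ x ≠ x₁ ∧ x' ≠ x₁ ∧
            ∃ y : Fin 40, y ∈ bNbhd E x₁ ∧ y ∈ bNbhd E x ∧ y ∈ bNbhd E x')) :
    bContains 5 5 (bCompl E) := by
  classical
  -- column neighborhoods
  set N : Fin 40 → Finset (Fin 6) := fun y => Finset.univ.filter (fun x => (x, y) ∈ E)
    with hN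
  -- columns of degree ≥ 2
  set S : Finset (Fin 40) := Finset.univ.filter (fun y => 2 ≤ (N y).card) with hSdef
  -- choose, for each high-degree column, a 2-subset of its neighborhood
  have hg : ∀ y ∈ S, ∃ t ⊆ N y, t.card = 2 := by
    intro y hy
    rw [hSdef, Finset.mem_filter] at hy
    exact Finset.exists_subset_card_eq hy.2
  choose! g hgsub hgcard using hg
  have hS : S.card ≤ 15 := by
    have hmaps : ∀ y ∈ S, g y ∈ Finset.powersetCard 2 (Finset.univ : Finset (Fin 6)) := by
      intro y hy
      rw [Finset.mem_powersetCard]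
      exact ⟨Finset.subset_univ _, hgcard y hy⟩
    have hinj : ∀ y ∈ S, ∀ y' ∈ S, g y = g y' → y = y' := by
      intro y hy y' hy' hgeq
      by_contra hne
      apply hK
      refine ⟨g y, {y, y'}, hgcard y hy, ?_, ?_⟩
      · rw [Finset.card_insert_of_notMem (by simpa using hne), Finset.card_singleton]
      · intro x hx b hb
        rcases Finset.mem_insert.1 hb with rfl | hb
        · have := hgsub _ hy hx
          rw [hN] at this
          exact (Finset.mem_filter.1 this).2
        · rw [Finset.mem_singleton] at hb
          subst hb
          rw [hgeq] at hx
          have := hgsub _ hy' hx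
          rw [hN] at this
          exact (Finset.mem_filter.1 this).2
    calc S.card ≤ (Finset.powersetCard 2 (Finset.univ : Finset (Fin 6))).card :=
          Finset.card_le_card_of_injOn g hmaps (fun a ha b hb => hinj a ha b hb)
      _ = 15 := by rw [Finset.card_powersetCard]; decide
  -- columns of degree ≤ 1
  set T : Finset (Fin 40) := Finset.univ.filter (fun y => ¬ 2 ≤ (N y).card) with hTdef
  have hT : 25 ≤ T.card := by
    have h40 : S.card + T.card = 40 := by
      rw [hSdef, hTdef, Finset.card_filter_add_card_filter_not]
      simp
    omega
  -- assign to each low-degree column its unique neighbor (or x₁ if none)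
  set f : Fin 40 → Fin 6 := fun y => if h : (N y).Nonempty then h.choose else x₁ with hf
  -- key property: if y ∈ T and (a, y) ∈ E then a = f y
  have hkey : ∀ y ∈ T, ∀ a : Fin 6, (a, y) ∈ E → a = f y := by
    intro y hy a ha
    rw [hTdef, Finset.mem_filter] at hy
    have haN : a ∈ N y := by rw [hN]; simp [ha]
    have hne : (N y).Nonempty := ⟨a, haN⟩
    have hfy : f y ∈ N y := by
      rw [hf]; simp only [dif_pos hne]; exact hne.choose_spec
    have hcard : (N y).card ≤ 1 := by omega
    have := Finset.card_le_one.1 hcard a haN (f y) hfy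
    simpa [hf, dif_pos hne] using this
  -- pigeonhole: some row x owns at least 5 columns of T
  obtain ⟨x, -, hx5⟩ := Finset.exists_lt_card_fiber_of_mul_lt_card_of_maps_to
    (s := T) (t := (Finset.univ : Finset (Fin 6))) (f := f) (n := 4)
    (fun a _ => Finset.mem_univ _) (by simp; omega)
  obtain ⟨B, hBsub, hBcard⟩ := Finset.exists_subset_card_eq (by omega :
    5 ≤ (T.filter (fun y => f y = x)).card)
  refine ⟨Finset.univ.erase x, B, ?_, hBcard, ?_⟩
  · rw [Finset.card_erase_of_mem (Finset.mem_univ _), Finset.card_univ]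
    simp
  · intro a ha b hb
    have haT := hBsub hb
    rw [Finset.mem_filter] at haT
    rw [bCompl, Finset.mem_sdiff]
    refine ⟨Finset.mem_univ _, fun hE => ?_⟩
    have := hkey b haT.1 a hE
    rw [haT.2] at this
    exact (Finset.mem_erase.1 ha).1 this
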